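/- For any group G of agents and any point (r,m): Γ, I, (r,m) ⊨ D_G φ if and only if Γ, I, (r,m) ⊨ ∃x (G ≈ x ∧ D_∅ (G ≈ x → φ)), where G ≈ x abbreviates ⋀_{i∈G} (i ≈ x). Hence every operator D_G is definable from the universal modality D_∅ together with global-state quantification and the local-state agreement construct. -/
import Mathlib


/-- Syntax of extended temporal epistemic logic ETL(Ag, Pp, Var). -/
inductive Fml (Ag Pp Var : Type) : Type where
  | atom : Pp → Fml Ag Pp Var
  | neg  : Fml Ag Pp Var → Fml Ag Pp Var
  | or   : Fml Ag Pp Var → Fml Ag Pp Var → Fml Ag Pp Var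
  | all  : Fml Ag Pp Var → Fml Ag Pp Var
  | next : Fml Ag Pp Var → Fml Ag Pp Var
  | until_ : Fml Ag Pp Var → Fml Ag Pp Var → Fml Ag Pp Var
  | exG  : Var → Fml Ag Pp Var → Fml Ag Pp Var
  | lid  : Ag → Var → Fml Ag Pp Var
  | dk   : Set Ag → Fml Ag Pp Var → Fml Ag Pp Var
  | ck   : Set Ag → Fml Ag Pp Var → Fml Ag Pp Var

namespace Fml
variable {Ag Pp Var : Type}

def and (φ ψ : Fml Ag Pp Var) : Fml Ag Pp Var := .neg (.or (.neg φ) (.neg ψ))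
def impl (φ ψ : Fml Ag Pp Var) : Fml Ag Pp Var := .or (.neg φ) ψ

/-- Free variables of a formula. -/
def FV : Fml Ag Pp Var → Set Var
  | atom _ => ∅
  | neg φ => FV φ
  | or φ ψ => FV φ ∪ FV ψ
  | all φ => FV φ
  | next φ => FV φ
  | until_ φ ψ => FV φ ∪ FV ψ
  | exG x φ => FV φ \ {x}
  | lid _ x => {x}
  | dk _ φ => FV φ
  | ck _ φ => FV φ

end Fml

section Semantics

variable {Ag Pp Var GS : Type} {L : Ag → Type} [DecidableEq Var]

/-- Satisfaction relation `Γ, I, (r,m) ⊨ φ` for an interpreted system whose runs are the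
set `R` of maps `ℕ → GS`, with local-state projections `loc` and valuation `val`. -/
def Sat (loc : ∀ a : Ag, GS → L a) (R : Set (ℕ → GS)) (val : (ℕ → GS) → ℕ → Set Pp) :
    (Var → GS) → {r : ℕ → GS // r ∈ R} → ℕ → Fml Ag Pp Var → Prop
  | _, r, m, .atom p => p ∈ val r.1 m
  | Γ, r, m, .neg φ => ¬ Sat loc R val Γ r m φ
  | Γ, r, m, .or φ ψ => Sat loc R val Γ r m φ ∨ Sat loc R val Γ r m ψ
  | Γ, r, m, .all φ =>
      ∀ r' : {r : ℕ → GS // r ∈ R}, (∀ k, k ≤ m → r'.1 k = r.1 k) → Sat loc R val Γ r' m φ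
  | Γ, r, m, .next φ => Sat loc R val Γ r (m + 1) φ
  | Γ, r, m, .until_ φ ψ =>
      ∃ m', m ≤ m' ∧ Sat loc R val Γ r m' ψ ∧ ∀ k, m ≤ k → k < m' → Sat loc R val Γ r k φ
  | Γ, r, m, .exG x φ =>
      ∃ (r' : {r : ℕ → GS // r ∈ R}) (m' : ℕ),
        Sat loc R val (Function.update Γ x (r'.1 m')) r m φ
  | Γ, r, m, .lid i x => loc i (r.1 m) = loc i (Γ x)
  | Γ, r, m, .dk G φ =>
      ∀ (r' : {r : ℕ → GS // r ∈ R}) (m' : ℕ),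
        (∀ i ∈ G, loc i (r'.1 m') = loc i (r.1 m)) → Sat loc R val Γ r' m' φ
  | Γ, r, m, .ck G φ =>
      ∀ p' : {r : ℕ → GS // r ∈ R} × ℕ,
        Relation.ReflTransGen
          (fun a b => ∃ i ∈ G, loc i (a.1.1 a.2) = loc i (b.1.1 b.2)) (r, m) p' →
        Sat loc R val Γ p'.1 p'.2 φ

end Semantics

namespace Fml
variable {Ag Pp Var : Type}
/-- A valid formula (used as the unit of finite conjunctions). -/
def tt (i0 : Ag) (x : Var) : Fml Ag Pp Var := .or (.lid i0 x) (.neg (.lid i0 x))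
/-- Finite conjunction of a list of formulas (with a given unit). -/
def bigConj (base : Fml Ag Pp Var) (fs : List (Fml Ag Pp Var)) : Fml Ag Pp Var :=
  fs.foldr Fml.and base
end Fml

section Helpers

variable {Ag Pp Var GS : Type} {L : Ag → Type} [DecidableEq Var]
variable (loc : ∀ a : Ag, GS → L a) (R : Set (ℕ → GS)) (val : (ℕ → GS) → ℕ → Set Pp)

theorem sat_agree (φ : Fml Ag Pp Var) :
    ∀ (Γ Γ' : Var → GS), (∀ y ∈ φ.FV, Γ y = Γ' y) →
    ∀ (r : {r : ℕ → GS // r ∈ R}) (m : ℕ),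
      (Sat loc R val Γ r m φ ↔ Sat loc R val Γ' r m φ) := by
  induction φ with
  | atom p => intro Γ Γ' h r m; simp [Sat]
  | neg φ ih =>
    intro Γ Γ' h r m
    simp only [Sat]; rw [ih Γ Γ' h]
  | or φ ψ ihφ ihψ =>
    intro Γ Γ' h r m
    have h1 : ∀ y ∈ φ.FV, Γ y = Γ' y := fun y hy => h y (Or.inl hy)
    have h2 : ∀ y ∈ ψ.FV, Γ y = Γ' y := fun y hy => h y (Or.inr hy)
    simp only [Sat]; rw [ihφ Γ Γ' h1, ihψ Γ Γ' h2]
  | all φ ih =>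
    intro Γ Γ' h r m
    simp only [Sat]
    exact forall_congr' fun r' => forall_congr' fun _ => ih Γ Γ' h r' m
  | next φ ih =>
    intro Γ Γ' h r m
    simp only [Sat]; exact ih Γ Γ' h r (m+1)
  | until_ φ ψ ihφ ihψ =>
    intro Γ Γ' h r m
    have h1 : ∀ y ∈ φ.FV, Γ y = Γ' y := fun y hy => h y (Or.inl hy)
    have h2 : ∀ y ∈ ψ.FV, Γ y = Γ' y := fun y hy => h y (Or.inr hy)
    simp only [Sat]
    exact exists_congr fun m' => and_congr_right fun _ =>
      and_congr (ihψ Γ Γ' h2 r m') (forall_congr' fun k => forall_congr' fun _ =>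
        forall_congr' fun _ => ihφ Γ Γ' h1 r k)
  | exG x φ ih =>
    intro Γ Γ' h r m
    simp only [Sat]
    refine exists_congr fun r' => exists_congr fun m' => ih _ _ ?_ r m
    intro y hy
    by_cases hyx : y = x
    · subst hyx; simp [Function.update]
    · simp only [Function.update, dif_neg hyx]
      exact h y ⟨hy, hyx⟩
  | lid i x =>
    intro Γ Γ' h r m
    have : Γ x = Γ' x := h x rfl
    simp [Sat, this]
  | dk G φ ih =>
    intro Γ Γ' h r m
    simp only [Sat]
    exact forall_congr' fun r' => forall_congr' fun m' =>
      forall_congr' fun _ => ih Γ Γ' h r' m'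
  | ck G φ ih =>
    intro Γ Γ' h r m
    simp only [Sat]
    exact forall_congr' fun p' => forall_congr' fun _ => ih Γ Γ' h p'.1 p'.2

theorem sat_and (Γ : Var → GS) (r : {r : ℕ → GS // r ∈ R}) (m : ℕ)
    (φ ψ : Fml Ag Pp Var) :
    Sat loc R val Γ r m (Fml.and φ ψ) ↔
      Sat loc R val Γ r m φ ∧ Sat loc R val Γ r m ψ := by
  simp only [Fml.and, Sat]; tauto

theorem sat_bigConj (i0 : Ag) (x : Var) (G : Finset Ag)
    (Γ : Var → GS) (r : {r : ℕ → GS // r ∈ R}) (m : ℕ) :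
    Sat loc R val Γ r m
      (Fml.bigConj (Fml.tt i0 x) (G.toList.map (fun i => Fml.lid i x))) ↔
      ∀ i ∈ G, loc i (r.1 m) = loc i (Γ x) := by
  have base : Sat loc R val Γ r m (Fml.tt i0 x) := by
    simp only [Fml.tt, Sat]; tauto
  rw [show (∀ i ∈ G, loc i (r.1 m) = loc i (Γ x)) ↔
      (∀ i ∈ G.toList, loc i (r.1 m) = loc i (Γ x)) by simp]
  induction G.toList with
  | nil => simpa [Fml.bigConj]
  | cons a l ih =>
    simp only [List.map_cons, Fml.bigConj, List.foldr_cons]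
    rw [sat_and]
    change (Sat loc R val Γ r m (Fml.lid a x) ∧ _) ↔ _
    rw [show Sat loc R val Γ r m (Fml.lid a x) ↔ loc a (r.1 m) = loc a (Γ x) from Iff.rfl]
    simp only [Fml.bigConj] at ih
    rw [List.forall_mem_cons]
    exact and_congr Iff.rfl ih

end Helpers

/-- `D_G φ` is equivalent to `∃x ((G ≈ x) ∧ D_∅ ((G ≈ x) → φ))`, where
`G ≈ x` is the conjunction `⋀_{i∈G} (i ≈ x)`, provided `x` is not free in `φ`.
Hence every operator `D_G` is definable from the universal modality `D_∅` together with
global-state quantification and the local-state agreement construct. -/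
theorem dk_definable_from_universal {Ag Pp Var GS : Type} {L : Ag → Type} [DecidableEq Var]
    (loc : ∀ a : Ag, GS → L a) (R : Set (ℕ → GS)) (val : (ℕ → GS) → ℕ → Set Pp)
    (G : Finset Ag) (i0 : Ag) (x : Var) (φ : Fml Ag Pp Var) (hx : x ∉ φ.FV)
    (Γ : Var → GS) (r : {r : ℕ → GS // r ∈ R}) (m : ℕ) :
    Sat loc R val Γ r m (.dk (↑G) φ) ↔
    Sat loc R val Γ r m
      (.exG x (Fml.and (Fml.bigConj (Fml.tt i0 x) (G.toList.map (fun i => Fml.lid i x)))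
        (.dk ∅ (Fml.impl (Fml.bigConj (Fml.tt i0 x) (G.toList.map (fun i => Fml.lid i x)))
          φ)))) := by
  set B := Fml.bigConj (Fml.tt i0 x)
    (G.toList.map (fun i => Fml.lid i x)) with hB
  have hagree : ∀ (Γ' : Var → GS) (g : GS) (r' : {r : ℕ → GS // r ∈ R}) (m' : ℕ),
      (Sat loc R val (Function.update Γ' x g) r' m' φ ↔ Sat loc R val Γ' r' m' φ) := by
    intro Γ' g r' m'
    refine sat_agree loc R val φ _ _ ?_ r' m'
    intro y hy
    have hyx : y ≠ x := fun h => hx (h ▸ hy)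
    simp [Function.update, hyx]
  constructor
  · intro h
    refine ⟨r, m, ?_⟩
    set Γ' := Function.update Γ x (r.1 m) with hΓ'
    rw [sat_and]
    have hΓ'x : Γ' x = r.1 m := by simp [hΓ']
    constructor
    · rw [sat_bigConj]; intro i _; rw [hΓ'x]
    · intro r' m' _
      show ¬ Sat loc R val Γ' r' m' B ∨ Sat loc R val Γ' r' m' φ
      by_cases hb : Sat loc R val Γ' r' m' B
      · right
        rw [sat_bigConj] at hb
        rw [hagree]
        exact h r' m' (fun i hi => by rw [hb i hi, hΓ'x])
      · exact Or.inl hb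
  · rintro ⟨r0, m0, hsat⟩
    set Γ' := Function.update Γ x (r0.1 m0) with hΓ'
    rw [sat_and] at hsat
    obtain ⟨hb, hd⟩ := hsat
    rw [sat_bigConj] at hb
    intro r' m' hrel
    have := hd r' m' (fun i hi => absurd hi (Set.notMem_empty i))
    rcases this with hnb | hφ
    · exfalso
      apply hnb
      rw [sat_bigConj]
      intro i hi
      rw [hrel i hi, hb i hi]
    · rwa [hagree] at hφ
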